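/- Let P, Q be orthogonal projections with ranges 𝔭, 𝔮 in generic position, and φ: 𝔮 → 𝔮^⊥ the closed operator with graph {(Qp, Q^⊥p) : p ∈ 𝔭}. Then the positive self-adjoint operator φ*φ on 𝔮 has graph gra φ*φ = {(QPq, QP^⊥q) : q ∈ 𝔮}; in particular dom(φ*φ) = QP𝔮. -/

import Mathlib

open scoped ComplexInnerProductSpace

/-- Composition of two operators given by their graphs (first apply `G`, then `H`). -/
def GraphComp {E : Type*} (G H : Set (E × E)) : Set (E × E) :=
  {z : E × E | ∃ w : E, (z.1, w) ∈ G ∧ (w, z.2) ∈ H}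

/-- Proposition 4.11 (`Provarphi*varphi`): for `φ` with graph `{(Qp, Q⊥p) : p ∈ 𝔭}` (with
`𝔭, 𝔮` in generic position), the positive self-adjoint operator `φ*φ` on `𝔮` has graph
`{(QPq, QP⊥q) : q ∈ 𝔮}`; in particular `dom (φ*φ) = QP𝔮`. -/
theorem graph_phi_star_phi
    {E : Type*} [NormedAddCommGroup E] [InnerProductSpace ℂ E] [CompleteSpace E]
    (P : E →L[ℂ] E) (hP_proj : P ∘L P = P) (hP_sa : IsSelfAdjoint P)
    (Q : E →L[ℂ] E) (hQ_proj : Q ∘L Q = Q) (hQ_sa : IsSelfAdjoint Q)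
    (hgen1 : LinearMap.range (P : E →ₗ[ℂ] E) ⊓ LinearMap.range (Q : E →ₗ[ℂ] E) = ⊥)
    (hgen2 : LinearMap.range (P : E →ₗ[ℂ] E) ⊓ (LinearMap.range (Q : E →ₗ[ℂ] E))ᗮ = ⊥)
    (hgen3 : (LinearMap.range (P : E →ₗ[ℂ] E))ᗮ ⊓ LinearMap.range (Q : E →ₗ[ℂ] E) = ⊥)
    (hgen4 : (LinearMap.range (P : E →ₗ[ℂ] E))ᗮ ⊓ (LinearMap.range (Q : E →ₗ[ℂ] E))ᗮ = ⊥)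
    (graφ graφstar : Set (E × E))
    (hφ : graφ = {z : E × E | ∃ p ∈ LinearMap.range (P : E →ₗ[ℂ] E), z = (Q p, (1 - Q) p)})
    -- graph of the adjoint `φ* : 𝔮ᗮ → 𝔮`
    (hφstar : graφstar = {z : E × E | z.1 ∈ (LinearMap.range (Q : E →ₗ[ℂ] E))ᗮ ∧ z.2 ∈ LinearMap.range (Q : E →ₗ[ℂ] E) ∧
      ∀ w ∈ graφ, ⟪w.2, z.1⟫ = ⟪w.1, z.2⟫}) :
    GraphComp graφ graφstar
      = {z : E × E | ∃ q ∈ LinearMap.range (Q : E →ₗ[ℂ] E), z = (Q (P q), Q ((1 - P) q))} ∧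
    Prod.fst '' GraphComp graφ graφstar
      = Q '' (P '' (LinearMap.range (Q : E →ₗ[ℂ] E) : Set E)) := by
  have hQidem : ∀ x, Q (Q x) = Q x := fun x => by
    rw [← ContinuousLinearMap.comp_apply, hQ_proj]
  have hPidem : ∀ x, P (P x) = P x := fun x => by
    rw [← ContinuousLinearMap.comp_apply, hP_proj]
  have hQsym : ∀ x y : E, ⟪Q x, y⟫ = ⟪x, Q y⟫ := fun x y => hQ_sa.isSymmetric x y
  have hPsym : ∀ x y : E, ⟪P x, y⟫ = ⟪x, P y⟫ := fun x y => hP_sa.isSymmetric x y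
  have hQfix : ∀ x, x ∈ LinearMap.range (Q : E →ₗ[ℂ] E) → Q x = x := by
    rintro x ⟨y, rfl⟩; exact hQidem y
  have hPfix : ∀ x, x ∈ LinearMap.range (P : E →ₗ[ℂ] E) → P x = x := by
    rintro x ⟨y, rfl⟩; exact hPidem y
  -- key inner product computation for `1 - Q`
  have key : ∀ x y : E, ⟪(1 - Q) x, (1 - Q) y⟫ = ⟪x, y⟫ - ⟪x, Q y⟫ := by
    intro x y
    simp only [ContinuousLinearMap.sub_apply, ContinuousLinearMap.one_apply,
      inner_sub_left, inner_sub_right, hQsym, hQidem]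
    ring
  -- P v = 0 if v is orthogonal to the range of P
  have hPzero : ∀ v : E, (∀ y : E, ⟪P y, v⟫ = 0) → P v = 0 := by
    intro v hv
    have h2 : ⟪P v, P v⟫ = (0 : ℂ) := (hPsym (P v) v).symm.trans (hv (P v))
    exact inner_self_eq_zero.mp h2
  have hmain : GraphComp graφ graφstar
      = {z : E × E | ∃ q ∈ LinearMap.range (Q : E →ₗ[ℂ] E), z = (Q (P q), Q ((1 - P) q))} := by
    ext z
    constructor
    · rintro ⟨w, hw1, hw2⟩
      rw [hφ] at hw1
      obtain ⟨p, hp, hz⟩ := hw1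
      have hz1 : z.1 = Q p := congrArg Prod.fst hz
      have hwp : w = (1 - Q) p := congrArg Prod.snd hz
      rw [hφstar] at hw2
      obtain ⟨-, hz2Q, hcond⟩ := hw2
      -- the key orthogonality
      have horth : ∀ y : E, ⟪P y, p - Q p - z.2⟫ = 0 := by
        intro y
        have h1 := hcond (Q (P y), (1 - Q) (P y)) (by
          rw [hφ]; exact ⟨P y, ⟨y, rfl⟩, rfl⟩)
        simp only [hwp] at h1
        rw [key] at h1
        -- h1 : ⟪P y, p⟫ - ⟪P y, Q p⟫ = ⟪Q (P y), z.2⟫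
        rw [hQsym, hQfix _ hz2Q] at h1
        rw [inner_sub_right, inner_sub_right, h1]
        ring
      have hPv : P (p - Q p - z.2) = 0 := hPzero _ horth
      have hp' : P (Q p + z.2) = p := by
        have h := hPv
        rw [sub_sub, map_sub, hPfix _ hp, sub_eq_zero] at h
        exact h.symm
      refine ⟨Q p + z.2, ?_, ?_⟩
      · exact Submodule.add_mem _ ⟨p, rfl⟩ hz2Q
      · have hq : Q (Q p + z.2) = Q p + z.2 := by
          rw [map_add, hQidem, hQfix _ hz2Q]
        ext
        · simp only [hz1, hp']
        · simp only [ContinuousLinearMap.sub_apply, ContinuousLinearMap.one_apply,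
            map_sub, hp', hq]
          simp [hz1]
    · rintro ⟨q, hq, rfl⟩
      refine ⟨(1 - Q) (P q), ?_, ?_⟩
      · rw [hφ]; exact ⟨P q, ⟨q, rfl⟩, rfl⟩
      · rw [hφstar]
        refine ⟨?_, ⟨(1 - P) q, rfl⟩, ?_⟩
        · rw [Submodule.mem_orthogonal]
          rintro u hu
          rw [← hQfix _ hu, hQsym]
          simp [hQidem]
        · rw [hφ]
          rintro w ⟨p', hp', rfl⟩
          rw [key]
          have hQq : Q q = q := hQfix _ hq
          have hPp' : P p' = p' := hPfix _ hp'
          rw [hQsym]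
          simp only [ContinuousLinearMap.sub_apply, ContinuousLinearMap.one_apply,
            map_sub, hQidem, inner_sub_right]
          rw [hQq, ← hPsym p' q, hPp']
  refine ⟨hmain, ?_⟩
  rw [hmain]
  ext x
  constructor
  · rintro ⟨z, ⟨q, hq, rfl⟩, rfl⟩
    exact ⟨P q, ⟨q, hq, rfl⟩, rfl⟩
  · rintro ⟨y, ⟨q, hq, rfl⟩, rfl⟩
    exact ⟨(Q (P q), Q ((1 - P) q)), ⟨q, hq, rfl⟩, rfl⟩
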